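/- Let d be a positive integer and let p : ℝ^d → ℝ be a probability density function (nonnegative, measurable, integrating to 1) that is square-integrable. Let X and Y be independent random vectors in ℝ^d each with density p, and let C_d denote the Lebesgue measure of the unit ball in ℝ^d. Then lim_{ε → 0⁺} P(‖X − Y‖ ≤ ε) / (C_d · ε^d) = ∫_{ℝ^d} p(x)² dx. -/

import Mathlib

open MeasureTheory ProbabilityTheory Filter

open MeasureTheory ProbabilityTheory Filter Metric Set
open scoped ENNReal Topology

variable {d : ℕ}

private lemma translate_memLp {f : EuclideanSpace ℝ (Fin d) → ℝ}
    (hf : MemLp f 2 volume) (t : EuclideanSpace ℝ (Fin d)) :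
    MemLp (fun x => f (x + t)) 2 volume :=
  hf.comp_measurePreserving (measurePreserving_add_right volume t)

private lemma eLpNorm_translate (f : EuclideanSpace ℝ (Fin d) → ℝ)
    (hf : AEStronglyMeasurable f (volume : Measure (EuclideanSpace ℝ (Fin d))))
    (t : EuclideanSpace ℝ (Fin d)) :
    eLpNorm (fun x => f (x + t)) 2 volume = eLpNorm f 2 volume :=
  eLpNorm_comp_measurePreserving hf (measurePreserving_add_right volume t)

private lemma memLp_of_sq {f : EuclideanSpace ℝ (Fin d) → ℝ} (hm : Measurable f)
    (hsq : Integrable (fun x => f x ^ 2) volume) : MemLp f 2 volume :=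
  (memLp_two_iff_integrable_sq hm.aestronglyMeasurable).mpr hsq

private lemma CS_bound {f g : EuclideanSpace ℝ (Fin d) → ℝ}
    (hf : MemLp f 2 volume) (hg : MemLp g 2 volume) :
    |∫ x, f x * g x| ≤ (eLpNorm f 2 volume).toReal * (eLpNorm g 2 volume).toReal := by
  have hpq : Real.HolderConjugate 2 2 := Real.HolderConjugate.two_two
  have h2 : (ENNReal.ofReal (2:ℝ)) = 2 := by norm_num
  have hf2 : MemLp f (ENNReal.ofReal (2:ℝ)) volume := by rw [h2]; exact hf
  have hg2 : MemLp g (ENNReal.ofReal (2:ℝ)) volume := by rw [h2]; exact hg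
  have key := integral_mul_norm_le_Lp_mul_Lq hpq hf2 hg2
  have h1 : |∫ x, f x * g x| ≤ ∫ x, ‖f x‖ * ‖g x‖ := by
    have := norm_integral_le_integral_norm (μ := (volume : Measure (EuclideanSpace ℝ (Fin d))))
      (fun x => f x * g x)
    simpa [norm_mul] using this
  have efr : ∀ (h : EuclideanSpace ℝ (Fin d) → ℝ), MemLp h 2 volume →
      (eLpNorm h 2 volume).toReal = (∫ x, ‖h x‖ ^ (2:ℝ)) ^ ((1:ℝ)/2) := by
    intro h hh
    have hnn : (0:ℝ) ≤ (∫ x, ‖h x‖ ^ ((2:ℝ≥0∞)).toReal) ^ ((2:ℝ≥0∞)).toReal⁻¹ :=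
      Real.rpow_nonneg (integral_nonneg fun x => Real.rpow_nonneg (norm_nonneg _) _) _
    rw [hh.eLpNorm_eq_integral_rpow_norm (by norm_num) (by norm_num),
      ENNReal.toReal_ofReal hnn]
    norm_num
  rw [efr f hf, efr g hg]
  exact h1.trans key
variable {d : ℕ}

private lemma tendsto_translate_L2 {f : EuclideanSpace ℝ (Fin d) → ℝ}
    (hf : MemLp f 2 volume) :
    Tendsto (fun t : EuclideanSpace ℝ (Fin d) =>
        eLpNorm (fun x => f (x + t) - f x) 2 volume) (𝓝 0) (𝓝 0) := by
  rw [ENNReal.tendsto_nhds_zero]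
  intro ε hε
  set δ : ℝ≥0∞ := min (ε / 3) 1 with hδdef
  have hδ0 : δ ≠ 0 :=
    (lt_min (ENNReal.div_pos hε.ne' (by norm_num)) zero_lt_one).ne'
  have hδε : δ + δ + δ ≤ ε := by
    calc δ + δ + δ ≤ ε / 3 + ε / 3 + ε / 3 :=
          add_le_add (add_le_add (min_le_left _ _) (min_le_left _ _)) (min_le_left _ _)
      _ = ε := ENNReal.add_thirds ε
  have hδtop : δ ≠ ∞ := (min_le_right _ _).trans_lt (by norm_num) |>.ne
  obtain ⟨g, hgsupp, hgδ, hgcont, hgmem⟩ :=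
    hf.exists_hasCompactSupport_eLpNorm_sub_le (p := 2) (by norm_num) hδ0
  -- compact set containing supports of all small translates
  set K : Set (EuclideanSpace ℝ (Fin d)) := cthickening 1 (tsupport g) with hK
  have hKcomp : IsCompact K := hgsupp.cthickening
  have hKvol : volume K ≠ ∞ := hKcomp.measure_lt_top.ne
  set C : ℝ≥0∞ := volume K ^ ((1:ℝ)/(2:ℝ≥0∞).toReal) with hC
  have hCtop : C ≠ ∞ := by
    refine (ENNReal.rpow_lt_top_of_nonneg (by norm_num) hKvol).ne
  -- choose η
  obtain ⟨η, hηpos, hηC⟩ : ∃ η : ℝ, 0 < η ∧ ENNReal.ofReal η * C ≤ δ := by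
    rcases eq_or_ne C 0 with hC0 | hC0
    · exact ⟨1, one_pos, by simp [hC0]⟩
    · refine ⟨δ.toReal / (C.toReal + 1), ?_, ?_⟩
      · have : 0 < δ.toReal := ENNReal.toReal_pos hδ0 hδtop
        positivity
      · have hCt : 0 < C.toReal + 1 := by positivity
        have h1 : ENNReal.ofReal (δ.toReal / (C.toReal + 1)) * C
            = ENNReal.ofReal (δ.toReal / (C.toReal + 1)) * ENNReal.ofReal C.toReal := by
          rw [ENNReal.ofReal_toReal hCtop]
        rw [h1, ← ENNReal.ofReal_mul (by positivity)]
        calc ENNReal.ofReal (δ.toReal / (C.toReal + 1) * C.toReal)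
            ≤ ENNReal.ofReal δ.toReal := by
              apply ENNReal.ofReal_le_ofReal
              rw [div_mul_eq_mul_div, div_le_iff₀ hCt]
              nlinarith [ENNReal.toReal_nonneg (a := δ), ENNReal.toReal_nonneg (a := C)]
          _ = δ := ENNReal.ofReal_toReal hδtop
  -- uniform continuity of g
  have hgu : UniformContinuous g := hgsupp.uniformContinuous_of_continuous hgcont
  obtain ⟨ρ, hρpos, hρ⟩ := Metric.uniformContinuous_iff.mp hgu η hηpos
  rw [eventually_nhds_iff_ball]
  refine ⟨min ρ 1, lt_min hρpos one_pos, fun t ht => ?_⟩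
  rw [mem_ball, dist_zero_right] at ht
  have htρ : ‖t‖ < ρ := ht.trans_le (min_le_left _ _)
  have ht1 : ‖t‖ < 1 := ht.trans_le (min_le_right _ _)
  -- measurability facts
  have hfm : AEStronglyMeasurable f volume := hf.aestronglyMeasurable
  have hfmt : AEStronglyMeasurable (fun x => f (x + t)) volume :=
    (hf.comp_measurePreserving (measurePreserving_add_right volume t)).aestronglyMeasurable
  have hgmt : AEStronglyMeasurable (fun x => g (x + t)) volume :=
    (hgmem.comp_measurePreserving (measurePreserving_add_right volume t)).aestronglyMeasurable
  have hgm : AEStronglyMeasurable g volume := hgmem.aestronglyMeasurable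
  -- the three pieces
  have hfg_t : eLpNorm (fun x => f (x + t) - g (x + t)) 2 volume ≤ δ := by
    have : (fun x => f (x + t) - g (x + t)) = (f - g) ∘ (fun x => x + t) := rfl
    rw [this, eLpNorm_comp_measurePreserving (hf.sub hgmem).aestronglyMeasurable
      (measurePreserving_add_right volume t)]
    exact hgδ
  have hmid : eLpNorm (fun x => g (x + t) - g x) 2 volume ≤ δ := by
    have hbound : ∀ x, ‖g (x + t) - g x‖ ≤ ‖K.indicator (fun _ => η) x‖ := by
      intro x
      by_cases hx : x ∈ K
      · rw [indicator_of_mem hx]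
        have : dist (x + t) x < ρ := by
          rw [dist_eq_norm]; simpa using htρ
        have h2 := hρ this
        rw [← dist_eq_norm, Real.norm_eq_abs]
        exact h2.le.trans (le_abs_self η)
      · have hgx : g x = 0 := by
          apply image_eq_zero_of_notMem_tsupport
          exact fun hmem => hx (self_subset_cthickening _ hmem)
        have hgxt : g (x + t) = 0 := by
          apply image_eq_zero_of_notMem_tsupport
          intro hmem
          apply hx
          apply mem_cthickening_of_dist_le x (x + t) 1 _ hmem
          rw [dist_eq_norm]
          simpa using ht1.le
        simp [hgx, hgxt]
    calc eLpNorm (fun x => g (x + t) - g x) 2 volume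
        ≤ eLpNorm (K.indicator (fun _ => η)) 2 volume := eLpNorm_mono hbound
      _ = ‖η‖₊ * volume K ^ ((1:ℝ)/(2:ℝ≥0∞).toReal) :=
          eLpNorm_indicator_const hKcomp.isClosed.measurableSet (by norm_num) (by norm_num)
      _ = ENNReal.ofReal η * C := by
          rw [hC]
          congr 1
          exact Real.enorm_eq_ofReal hηpos.le
      _ ≤ δ := hηC
  have hgf : eLpNorm (fun x => g x - f x) 2 volume ≤ δ := by
    have : (fun x => g x - f x) = -(f - g) := by funext x; simp [Pi.sub_apply]
    rw [this, eLpNorm_neg]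
    exact hgδ
  -- triangle inequality
  have hdecomp : (fun x => f (x + t) - f x) =
      (fun x => f (x + t) - g (x + t)) + ((fun x => g (x + t) - g x) + (fun x => g x - f x)) := by
    funext x; simp only [Pi.add_apply]; ring
  calc eLpNorm (fun x => f (x + t) - f x) 2 volume
      ≤ eLpNorm (fun x => f (x + t) - g (x + t)) 2 volume +
        eLpNorm ((fun x => g (x + t) - g x) + (fun x => g x - f x)) 2 volume := by
        rw [hdecomp]
        exact eLpNorm_add_le (hfmt.sub hgmt) ((hgmt.sub hgm).add (hgm.sub hfm)) one_le_two
    _ ≤ eLpNorm (fun x => f (x + t) - g (x + t)) 2 volume +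
        (eLpNorm (fun x => g (x + t) - g x) 2 volume +
         eLpNorm (fun x => g x - f x) 2 volume) := by
        gcongr
        exact eLpNorm_add_le (hgmt.sub hgm) (hgm.sub hfm) one_le_two
    _ ≤ δ + (δ + δ) := by gcongr
    _ ≤ ε := by rw [← add_assoc]; exact hδε
variable {d : ℕ}

private lemma integrable_mul_L2 {f g : EuclideanSpace ℝ (Fin d) → ℝ}
    (hf : MemLp f 2 volume) (hg : MemLp g 2 volume) :
    Integrable (fun x => f x * g x) volume := by
  have : MemLp (f • g) 1 volume :=
    haveI : ENNReal.HolderTriple 2 2 1 := ⟨by rw [ENNReal.inv_two_add_inv_two, inv_one]⟩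
    hg.smul hf
  exact (memLp_one_iff_integrable.mp this)

private lemma collision_eq (p : EuclideanSpace ℝ (Fin d) → ℝ)
    (hp_meas : Measurable p) (hp_nonneg : ∀ x, 0 ≤ p x)
    (hp2 : MemLp p 2 volume) (ε : ℝ) :
    ((volume.withDensity fun x => ENNReal.ofReal (p x)).prod
      (volume.withDensity fun x => ENNReal.ofReal (p x)))
      {z : EuclideanSpace ℝ (Fin d) × EuclideanSpace ℝ (Fin d) | dist z.1 z.2 ≤ ε}
    = ∫⁻ t in closedBall (0 : EuclideanSpace ℝ (Fin d)) ε,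
        ENNReal.ofReal (∫ x, p x * p (x + t)) := by
  set q : EuclideanSpace ℝ (Fin d) → ℝ≥0∞ := fun x => ENNReal.ofReal (p x) with hq
  have hqm : Measurable q := hp_meas.ennreal_ofReal
  have hSmeas : MeasurableSet {z : EuclideanSpace ℝ (Fin d) × EuclideanSpace ℝ (Fin d) |
      dist z.1 z.2 ≤ ε} :=
    (isClosed_le (continuous_fst.dist continuous_snd) continuous_const).measurableSet
  have hsum : Measurable fun z : EuclideanSpace ℝ (Fin d) × EuclideanSpace ℝ (Fin d) =>
      z.1 + z.2 := measurable_fst.add measurable_snd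
  rw [Measure.prod_apply hSmeas]
  have step1 : ∀ x : EuclideanSpace ℝ (Fin d),
      (volume.withDensity q) (Prod.mk x ⁻¹' {z : EuclideanSpace ℝ (Fin d) ×
        EuclideanSpace ℝ (Fin d) | dist z.1 z.2 ≤ ε})
      = ∫⁻ t in closedBall (0 : EuclideanSpace ℝ (Fin d)) ε, q (x + t) := by
    intro x
    have hpre : Prod.mk x ⁻¹' {z : EuclideanSpace ℝ (Fin d) ×
        EuclideanSpace ℝ (Fin d) | dist z.1 z.2 ≤ ε} = closedBall x ε := by
      ext y; simp [Metric.mem_closedBall, dist_comm]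
    rw [hpre, withDensity_apply _ measurableSet_closedBall]
    -- change of variables y = x + t
    rw [← lintegral_indicator measurableSet_closedBall,
      ← lintegral_indicator (μ := volume) measurableSet_closedBall]
    rw [← lintegral_add_left_eq_self (fun y => (closedBall x ε).indicator q y) x]
    congr 1
    funext t
    by_cases htb : t ∈ closedBall (0 : EuclideanSpace ℝ (Fin d)) ε
    · rw [indicator_of_mem htb]
      have : x + t ∈ closedBall x ε := by
        rw [mem_closedBall, dist_eq_norm]
        simpa using (mem_closedBall_zero_iff.mp htb)
      rw [indicator_of_mem this]
    · have : x + t ∉ closedBall x ε := by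
        rw [mem_closedBall, dist_eq_norm, add_sub_cancel_left]
        exact fun h => htb (mem_closedBall_zero_iff.mpr h)
      rw [indicator_of_notMem htb, indicator_of_notMem this]
  calc ∫⁻ x, (volume.withDensity q) (Prod.mk x ⁻¹' _) ∂(volume.withDensity q)
      = ∫⁻ x, (∫⁻ t in closedBall (0 : EuclideanSpace ℝ (Fin d)) ε, q (x + t))
          ∂(volume.withDensity q) := by
        exact lintegral_congr step1
    _ = ∫⁻ x, q x * (∫⁻ t in closedBall (0 : EuclideanSpace ℝ (Fin d)) ε, q (x + t)) := by
        rw [lintegral_withDensity_eq_lintegral_mul _ hqm]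
        · rfl
        · exact (Measurable.lintegral_prod_right (hqm.comp hsum))
    _ = ∫⁻ x, (∫⁻ t in closedBall (0 : EuclideanSpace ℝ (Fin d)) ε, q x * q (x + t)) := by
        congr 1; funext x
        exact (lintegral_const_mul (q x) (hqm.comp (measurable_const_add x))).symm
    _ = ∫⁻ t in closedBall (0 : EuclideanSpace ℝ (Fin d)) ε, ∫⁻ x, q x * q (x + t) := by
        exact lintegral_lintegral_swap
          ((hqm.comp measurable_fst).mul (hqm.comp hsum)).aemeasurable
    _ = ∫⁻ t in closedBall (0 : EuclideanSpace ℝ (Fin d)) ε,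
          ENNReal.ofReal (∫ x, p x * p (x + t)) := by
        apply lintegral_congr
        intro t
        have htrans : MemLp (fun x => p (x + t)) 2 volume :=
          hp2.comp_measurePreserving (measurePreserving_add_right volume t)
        have hint : Integrable (fun x => p x * p (x + t)) volume :=
          integrable_mul_L2 hp2 htrans
        rw [ofReal_integral_eq_lintegral_ofReal hint
          (Eventually.of_forall fun x => mul_nonneg (hp_nonneg x) (hp_nonneg _))]
        apply lintegral_congr
        intro x
        rw [ENNReal.ofReal_mul (hp_nonneg x)]

/-- **Small-ball collision asymptotic for square-integrable densities.**
Let `p` be a square-integrable probability density on `ℝ^d`, let `X, Y` be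
independent random vectors with density `p`, and let `C_d` be the Lebesgue
measure of the unit ball in `ℝ^d`. Then
`P(‖X − Y‖ ≤ ε) / (C_d · ε^d) → ∫ p² ` as `ε → 0⁺`. -/
theorem smallBall_collision_asymptotic
    (d : ℕ) (hd : 0 < d)
    (p : EuclideanSpace ℝ (Fin d) → ℝ)
    (hp_meas : Measurable p) (hp_nonneg : ∀ x, 0 ≤ p x)
    (hp_int : ∫ x, p x = 1)
    (hp_sq : Integrable fun x => p x ^ 2)
    (Ω : Type*) [MeasurableSpace Ω] (P : Measure Ω) [IsProbabilityMeasure P]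
    (X Y : Ω → EuclideanSpace ℝ (Fin d)) (hX : Measurable X) (hY : Measurable Y)
    (hindep : IndepFun X Y P)
    (hXd : Measure.map X P = volume.withDensity fun x => ENNReal.ofReal (p x))
    (hYd : Measure.map Y P = volume.withDensity fun x => ENNReal.ofReal (p x))
    (Cd : ℝ)
    (hCd : Cd = (volume (Metric.ball (0 : EuclideanSpace ℝ (Fin d)) 1)).toReal) :
    Tendsto
      (fun ε : ℝ => (P {ω | dist (X ω) (Y ω) ≤ ε}).toReal / (Cd * ε ^ d))
      (nhdsWithin 0 (Set.Ioi 0)) (nhds (∫ x, p x ^ 2)) := by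
  have hp2 : MemLp p 2 volume := memLp_of_sq hp_meas hp_sq
  set F : EuclideanSpace ℝ (Fin d) → ℝ := fun t => ∫ x, p x * p (x + t) with hF
  have hF0 : F 0 = ∫ x, p x ^ 2 := by
    simp only [hF, add_zero]
    congr 1; funext x; ring
  set Sp : ℝ := (eLpNorm p 2 volume).toReal with hSp
  have htransmem : ∀ t, MemLp (fun x => p (x + t)) 2 volume := fun t => translate_memLp hp2 t
  have hFabs : ∀ t, |F t| ≤ Sp * Sp := by
    intro t
    have := CS_bound hp2 (htransmem t)
    rwa [eLpNorm_translate p hp2.aestronglyMeasurable t] at this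
  have hFnonneg : ∀ t, 0 ≤ F t :=
    fun t => integral_nonneg fun x => mul_nonneg (hp_nonneg x) (hp_nonneg _)
  have hFbound : ∀ t, |F t - F 0| ≤
      Sp * (eLpNorm (fun x => p (x + t) - p x) 2 volume).toReal := by
    intro t
    have hint : Integrable (fun x => p x * p (x + t)) volume :=
      integrable_mul_L2 hp2 (htransmem t)
    have hint0 : Integrable (fun x => p x * p x) volume := integrable_mul_L2 hp2 hp2
    have hdiff : F t - F 0 = ∫ x, p x * (p (x + t) - p x) := by
      have hF0' : F 0 = ∫ x, p x * p x := by
        simp only [hF, add_zero]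
      have h1 : F t = ∫ x, p x * p (x + t) := rfl
      rw [h1, hF0', ← integral_sub hint hint0]
      congr 1; funext x; ring
    rw [hdiff]
    exact CS_bound hp2 ((htransmem t).sub hp2)
  -- modulus of continuity of F at 0
  have hmod : ∀ δ : ℝ, 0 < δ → ∃ ρ > (0:ℝ), ∀ t : EuclideanSpace ℝ (Fin d),
      ‖t‖ < ρ → |F t - F 0| ≤ δ := by
    intro δ hδ
    have h1 : Tendsto (fun t : EuclideanSpace ℝ (Fin d) =>
        Sp * (eLpNorm (fun x => p (x + t) - p x) 2 volume).toReal) (𝓝 0) (𝓝 (Sp * 0)) := by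
      refine Tendsto.const_mul Sp ?_
      have := (ENNReal.tendsto_toReal (a := 0) (by simp)).comp (tendsto_translate_L2 hp2)
      simpa [Function.comp_def] using this
    rw [mul_zero] at h1
    have h2 := h1.eventually (eventually_lt_nhds hδ)
    rw [Metric.eventually_nhds_iff] at h2
    obtain ⟨ρ, hρpos, hρ⟩ := h2
    refine ⟨ρ, hρpos, fun t ht => ?_⟩
    have := hρ (y := t) (by rwa [dist_zero_right])
    exact (hFbound t).trans this.le
  -- measurability of F
  have hFsm : StronglyMeasurable F := by
    have hm : StronglyMeasurable fun z : EuclideanSpace ℝ (Fin d) × EuclideanSpace ℝ (Fin d) =>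
        p z.2 * p (z.2 + z.1) :=
      ((hp_meas.comp measurable_snd).mul
        (hp_meas.comp (measurable_snd.add measurable_fst))).stronglyMeasurable
    exact hm.integral_prod_right'
  -- constants
  have hCball0 : volume (Metric.ball (0 : EuclideanSpace ℝ (Fin d)) 1) ≠ 0 :=
    (Metric.measure_ball_pos volume 0 one_pos).ne'
  have hCballtop : volume (Metric.ball (0 : EuclideanSpace ℝ (Fin d)) 1) ≠ ∞ :=
    measure_ball_lt_top.ne
  have hCdpos : 0 < Cd := by
    rw [hCd]; exact ENNReal.toReal_pos hCball0 hCballtop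
  -- volume of closed balls
  have hvol : ∀ ε : ℝ, 0 ≤ ε →
      (volume (closedBall (0 : EuclideanSpace ℝ (Fin d)) ε)).toReal = Cd * ε ^ d := by
    intro ε hε
    rw [Measure.addHaar_closedBall _ _ hε, ENNReal.toReal_mul,
      ENNReal.toReal_ofReal (by positivity), hCd]
    rw [finrank_euclideanSpace_fin]
    ring
  -- identification of the collision probability
  have hmapXY : Measure.map (fun ω => (X ω, Y ω)) P =
      (volume.withDensity fun x => ENNReal.ofReal (p x)).prod
      (volume.withDensity fun x => ENNReal.ofReal (p x)) := by
    rw [(ProbabilityTheory.indepFun_iff_map_prod_eq_prod_map_map hX.aemeasurable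
      hY.aemeasurable).mp hindep, hXd, hYd]
  have hP : ∀ ε : ℝ, (P {ω | dist (X ω) (Y ω) ≤ ε}).toReal
      = ∫ t in closedBall (0 : EuclideanSpace ℝ (Fin d)) ε, F t := by
    intro ε
    have hSmeas : MeasurableSet {z : EuclideanSpace ℝ (Fin d) ×
        EuclideanSpace ℝ (Fin d) | dist z.1 z.2 ≤ ε} :=
      (isClosed_le (continuous_fst.dist continuous_snd) continuous_const).measurableSet
    have hpre : {ω | dist (X ω) (Y ω) ≤ ε}
        = (fun ω => (X ω, Y ω)) ⁻¹' {z | dist z.1 z.2 ≤ ε} := rfl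
    rw [hpre, ← Measure.map_apply (hX.prodMk hY) hSmeas, hmapXY,
      collision_eq p hp_meas hp_nonneg hp2 ε]
    rw [integral_eq_lintegral_of_nonneg_ae (Eventually.of_forall (fun t => hFnonneg t))
      hFsm.aestronglyMeasurable.restrict]
  -- the final ε-δ argument
  rw [Metric.tendsto_nhdsWithin_nhds]
  intro δ hδ
  obtain ⟨ρ, hρpos, hρ⟩ := hmod (δ / 2) (by positivity)
  refine ⟨min ρ 1, lt_min hρpos one_pos, ?_⟩
  intro ε hε hdist
  rw [Set.mem_Ioi] at hε
  rw [Real.dist_eq, sub_zero, abs_of_pos hε] at hdist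
  have hερ : ε < ρ := hdist.trans_le (min_le_left _ _)
  have hden : 0 < Cd * ε ^ d := by positivity
  have hB : volume (closedBall (0 : EuclideanSpace ℝ (Fin d)) ε) < ∞ := measure_closedBall_lt_top
  have hconst : (∫ _t in closedBall (0 : EuclideanSpace ℝ (Fin d)) ε, F 0)
      = (Cd * ε ^ d) * F 0 := by
    rw [setIntegral_const, measureReal_def, hvol ε hε.le, smul_eq_mul]
  have hIntF : IntegrableOn F (closedBall (0 : EuclideanSpace ℝ (Fin d)) ε) volume := by
    refine Measure.integrableOn_of_bounded (M := Sp * Sp) hB.ne hFsm.aestronglyMeasurable ?_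
    exact Eventually.of_forall fun t => by rw [Real.norm_eq_abs]; exact hFabs t
  have hsplit : (∫ t in closedBall (0 : EuclideanSpace ℝ (Fin d)) ε, F t) - (Cd * ε ^ d) * F 0
      = ∫ t in closedBall (0 : EuclideanSpace ℝ (Fin d)) ε, (F t - F 0) := by
    rw [← hconst, ← integral_sub hIntF (integrableOn_const hB.ne)]
  have herr : |(∫ t in closedBall (0 : EuclideanSpace ℝ (Fin d)) ε, F t)
      - (Cd * ε ^ d) * F 0| ≤ (δ/2) * (Cd * ε ^ d) := by
    rw [hsplit]
    have hbd : ∀ t ∈ closedBall (0 : EuclideanSpace ℝ (Fin d)) ε, ‖F t - F 0‖ ≤ δ/2 := by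
      intro t htB
      rw [Real.norm_eq_abs]
      exact hρ t ((mem_closedBall_zero_iff.mp htB).trans_lt hερ)
    have := norm_setIntegral_le_of_norm_le_const (μ := volume) hB hbd
    rw [measureReal_def, hvol ε hε.le] at this
    exact this
  rw [Real.dist_eq, hP ε, ← hF0]
  have hfrac : (∫ t in closedBall (0 : EuclideanSpace ℝ (Fin d)) ε, F t) / (Cd * ε ^ d) - F 0
      = ((∫ t in closedBall (0 : EuclideanSpace ℝ (Fin d)) ε, F t) - (Cd * ε ^ d) * F 0)
        / (Cd * ε ^ d) := by
    field_simp
  rw [hfrac, abs_div, abs_of_pos hden]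
  calc |(∫ t in closedBall (0 : EuclideanSpace ℝ (Fin d)) ε, F t) - (Cd * ε ^ d) * F 0|
        / (Cd * ε ^ d)
      ≤ ((δ/2) * (Cd * ε ^ d)) / (Cd * ε ^ d) := by
        gcongr
    _ = δ/2 := by field_simp
    _ < δ := by linarith
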